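/- The map π : F → ℙ¹ given by (x₀:x₁:x₂) ↦ (x₁⁷ : x₂⁷) is a well-defined surjective morphism of degree 49 whose fibers are exactly the orbits of the (ℤ/7)²-action φ on F. -/

import Mathlib

/-- The Fermat septic as a subset of `ℙ²(ℂ)`. -/
def fermatSeptic : Set (Projectivization ℂ (Fin 3 → ℂ)) :=
  {p | p.rep 0 ^ 7 + p.rep 1 ^ 7 + p.rep 2 ^ 7 = 0}

/-- The diagonal action of `(ℤ/7)²` on `ℂ³`. -/
noncomputable def diagAct (ζ : ℂ) (g : ZMod 7 × ZMod 7) (v : Fin 3 → ℂ) : Fin 3 → ℂ :=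
  ![v 0, ζ ^ g.1.val * v 1, ζ ^ g.2.val * v 2]

open Projectivization Polynomial

lemma pow7_eq_zero {x : ℂ} (h : x ^ 7 = 0) : x = 0 :=
  pow_eq_zero_iff (n := 7) (by norm_num) |>.1 h

lemma rep_mk_aux (v : Fin 3 → ℂ) (hv : v ≠ 0) :
    ∃ c : ℂ, c ≠ 0 ∧ (Projectivization.mk ℂ v hv).rep = c • v := by
  obtain ⟨a, ha⟩ := Projectivization.exists_smul_eq_mk_rep ℂ v hv
  exact ⟨(a : ℂ), a.ne_zero, by rw [← ha, Units.smul_def]⟩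

lemma root7 (a : ℂ) : ∃ z : ℂ, z ^ 7 = a :=
  IsAlgClosed.exists_pow_nat_eq a (by norm_num)

lemma zeta_pow_aux {ζ : ℂ} (hζ : IsPrimitiveRoot ζ 7) {x y : ℂ} (h : x ^ 7 = y ^ 7)
    (hy : y ≠ 0) : ∃ k : ZMod 7, x = ζ ^ k.val * y := by
  have h1 : (x / y) ^ 7 = 1 := by
    rw [div_pow, h, div_self (pow_ne_zero _ hy)]
  obtain ⟨i, hi, hx⟩ := hζ.eq_pow_of_pow_eq_one h1
  refine ⟨(i : ZMod 7), ?_⟩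
  rw [ZMod.val_natCast_of_lt hi, hx, div_mul_cancel₀ _ hy]

lemma not_both_zero (p : Projectivization ℂ (Fin 3 → ℂ)) (hp : p ∈ fermatSeptic) :
    ¬(p.rep 1 = 0 ∧ p.rep 2 = 0) := by
  rintro ⟨h1, h2⟩
  have hp' : p.rep 0 ^ 7 + p.rep 1 ^ 7 + p.rep 2 ^ 7 = 0 := hp
  rw [h1, h2] at hp'
  have h0 : p.rep 0 = 0 := pow7_eq_zero (by linear_combination hp')
  apply p.rep_nonzero
  funext i
  fin_cases i <;> assumption

/-- The map `π : F → ℙ¹`, `(x₀:x₁:x₂) ↦ (x₁⁷ : x₂⁷)`, is a well-defined morphism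
(on `F`, `x₁` and `x₂` never vanish simultaneously), it is surjective, it has degree `49`
(each fiber over a point `(w₁ : w₂)` away from the three branch points `(0:1)`, `(1:0)`,
`(-1:1)` consists of exactly `49` points), and its fibers are exactly the orbits of the
`(ℤ/7)²`-action `φ` on `F`.  Here `π(p) = (w₁ : w₂)` is expressed by the cross-ratio
condition `x₁⁷ w₂ = x₂⁷ w₁` on a representative. -/
theorem fermat_septic_quotient_map (ζ : ℂ) (hζ : IsPrimitiveRoot ζ 7) :
    (∀ p ∈ fermatSeptic, ¬(p.rep 1 = 0 ∧ p.rep 2 = 0)) ∧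
    (∀ w : ℂ × ℂ, w ≠ 0 → ∃ p ∈ fermatSeptic, p.rep 1 ^ 7 * w.2 = p.rep 2 ^ 7 * w.1) ∧
    (∀ w : ℂ × ℂ, w.1 ≠ 0 → w.2 ≠ 0 → w.1 + w.2 ≠ 0 →
      {p ∈ fermatSeptic | p.rep 1 ^ 7 * w.2 = p.rep 2 ^ 7 * w.1}.ncard = 49) ∧
    (∀ p ∈ fermatSeptic, ∀ q ∈ fermatSeptic,
      (p.rep 1 ^ 7 * q.rep 2 ^ 7 = p.rep 2 ^ 7 * q.rep 1 ^ 7 ↔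
        ∃ g : ZMod 7 × ZMod 7, ∃ c : ℂ, c ≠ 0 ∧ diagAct ζ g p.rep = c • q.rep)) := by
  refine ⟨not_both_zero, ?_, ?_, ?_⟩
  · -- surjectivity
    rintro ⟨w1, w2⟩ hw
    obtain ⟨x1, hx1⟩ := root7 w1
    obtain ⟨x2, hx2⟩ := root7 w2
    obtain ⟨x0, hx0⟩ := root7 (-(w1 + w2))
    have hvne : (![x0, x1, x2] : Fin 3 → ℂ) ≠ 0 := by
      intro h
      apply hw
      have h1 := congrFun h 1
      have h2 := congrFun h 2
      simp at h1 h2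
      rw [h1] at hx1; rw [h2] at hx2
      simp only [Prod.ext_iff]
      constructor
      · rw [← hx1]; norm_num
      · rw [← hx2]; norm_num
    obtain ⟨c, hc, hrep⟩ := rep_mk_aux _ hvne
    refine ⟨Projectivization.mk ℂ _ hvne, ?_, ?_⟩
    · show _ = 0
      rw [hrep]
      simp only [Pi.smul_apply, smul_eq_mul]
      simp only [Matrix.cons_val_zero, Matrix.cons_val_one, Matrix.head_cons,
        Matrix.cons_val_two, Matrix.tail_cons]
      rw [mul_pow, mul_pow, mul_pow, hx0, hx1, hx2]
      ring
    · rw [hrep]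
      simp only [Pi.smul_apply, smul_eq_mul]
      simp only [Matrix.cons_val_zero, Matrix.cons_val_one, Matrix.head_cons, Matrix.cons_val_two, Matrix.tail_cons]
      rw [mul_pow, mul_pow, hx1, hx2]
      ring
  · -- degree 49
    rintro ⟨w1, w2⟩ hw1 hw2 hw12
    classical
    simp only at hw1 hw2 hw12 ⊢
    have hA : -(w1 + w2) / w1 ≠ 0 := div_ne_zero (neg_ne_zero.2 hw12) hw1
    have hB : w2 / w1 ≠ 0 := div_ne_zero hw2 hw1
    obtain ⟨r0, hr0⟩ := root7 (-(w1 + w2) / w1)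
    obtain ⟨r2, hr2⟩ := root7 (w2 / w1)
    have hr0ne : r0 ≠ 0 := fun h => hA (by rw [← hr0, h]; norm_num)
    have hr2ne : r2 ≠ 0 := fun h => hB (by rw [← hr2, h]; norm_num)
    have hvne : ∀ u v : ℂ, (![r0 * u, 1, r2 * v] : Fin 3 → ℂ) ≠ 0 := by
      intro u v h
      have := congrFun h 1
      simp at this
    let f : ℂ × ℂ → Projectivization ℂ (Fin 3 → ℂ) :=
      fun uv => Projectivization.mk ℂ ![r0 * uv.1, 1, r2 * uv.2] (hvne uv.1 uv.2)
    have hinj : Function.Injective f := by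
      intro ⟨u, v⟩ ⟨u', v'⟩ huv
      simp only [f] at huv
      rw [mk_eq_mk_iff] at huv
      obtain ⟨a, ha⟩ := huv
      have h1 := congrFun ha 1
      have h0 := congrFun ha 0
      have h2 := congrFun ha 2
      simp only [Pi.smul_apply, Matrix.cons_val_zero, Matrix.cons_val_one, Matrix.head_cons,
        Matrix.cons_val_two, Matrix.tail_cons, Units.smul_def, smul_eq_mul] at h0 h1 h2
      rw [mul_one] at h1
      rw [h1, one_mul] at h0 h2
      have hu : u' = u := by
        have := mul_left_cancel₀ hr0ne h0
        exact this
      have hv : v' = v := mul_left_cancel₀ hr2ne h2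
      simp [Prod.ext_iff, hu, hv]
    have hset : {p | p ∈ fermatSeptic ∧ p.rep 1 ^ 7 * w2 = p.rep 2 ^ 7 * w1} =
        ↑((nthRootsFinset 7 (1 : ℂ) ×ˢ nthRootsFinset 7 (1 : ℂ)).image f) := by
      ext p
      simp only [Set.mem_setOf_eq, Finset.coe_image, Set.mem_image, Finset.mem_coe,
        Finset.mem_product]
      constructor
      · rintro ⟨hpF, hpfib⟩
        have hpF' : p.rep 0 ^ 7 + p.rep 1 ^ 7 + p.rep 2 ^ 7 = 0 := hpF
        have hp1 : p.rep 1 ≠ 0 := by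
          intro h1
          apply not_both_zero p hpF
          refine ⟨h1, ?_⟩
          rw [h1] at hpfib
          have : p.rep 2 ^ 7 * w1 = 0 := by rw [← hpfib]; ring
          rcases mul_eq_zero.1 this with h' | h'
          · exact pow7_eq_zero h'
          · exact absurd h' hw1
        have hp27 : p.rep 2 ^ 7 = p.rep 1 ^ 7 * (w2 / w1) := by
          field_simp
          linear_combination -hpfib
        have hp07 : p.rep 0 ^ 7 = p.rep 1 ^ 7 * (-(w1 + w2) / w1) := by
          field_simp
          linear_combination w1 * hpF' + hpfib
        refine ⟨(p.rep 0 / (p.rep 1 * r0), p.rep 2 / (p.rep 1 * r2)), ⟨?_, ?_⟩, ?_⟩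
        · rw [mem_nthRootsFinset (by norm_num) (1 : ℂ)]
          rw [div_pow, mul_pow, hr0, hp07]
          exact div_self (mul_ne_zero (pow_ne_zero _ hp1) hA)
        · rw [mem_nthRootsFinset (by norm_num) (1 : ℂ)]
          rw [div_pow, mul_pow, hr2, hp27]
          exact div_self (mul_ne_zero (pow_ne_zero _ hp1) hB)
        · show Projectivization.mk ℂ _ _ = p
          conv_rhs => rw [← p.mk_rep]
          rw [mk_eq_mk_iff']
          refine ⟨(p.rep 1)⁻¹, ?_⟩
          funext i
          fin_cases i
          · show (p.rep 1)⁻¹ * p.rep 0 = r0 * (p.rep 0 / (p.rep 1 * r0))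
            field_simp
          · show (p.rep 1)⁻¹ * p.rep 1 = 1
            field_simp
          · show (p.rep 1)⁻¹ * p.rep 2 = r2 * (p.rep 2 / (p.rep 1 * r2))
            field_simp
      · rintro ⟨⟨u, v⟩, ⟨hu, hv⟩, rfl⟩
        rw [mem_nthRootsFinset (by norm_num) (1 : ℂ)] at hu hv
        obtain ⟨c, hc, hrep⟩ := rep_mk_aux _ (hvne u v)
        constructor
        · show _ = 0
          rw [hrep]
          simp only [Pi.smul_apply, smul_eq_mul, Matrix.cons_val_zero, Matrix.cons_val_one,
            Matrix.head_cons, Matrix.cons_val_two, Matrix.tail_cons]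
          have e : (c * (r0 * u)) ^ 7 + (c * 1) ^ 7 + (c * (r2 * v)) ^ 7
              = c ^ 7 * (r0 ^ 7 * u ^ 7 + 1 + r2 ^ 7 * v ^ 7) := by ring
          rw [e, hr0, hr2, hu, hv]
          field_simp
          ring
        · rw [hrep]
          simp only [Pi.smul_apply, smul_eq_mul, Matrix.cons_val_zero, Matrix.cons_val_one,
            Matrix.head_cons, Matrix.cons_val_two, Matrix.tail_cons]
          have e : (c * (r2 * v)) ^ 7 = c ^ 7 * (r2 ^ 7 * v ^ 7) := by ring
          rw [e, hr2, hv, mul_pow]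
          field_simp
    rw [hset, Set.ncard_coe_finset, Finset.card_image_of_injective _ hinj,
      Finset.card_product, hζ.card_nthRootsFinset]
  · -- fibers = orbits
    intro p hp q hq
    have hpF : p.rep 0 ^ 7 + p.rep 1 ^ 7 + p.rep 2 ^ 7 = 0 := hp
    have hqF : q.rep 0 ^ 7 + q.rep 1 ^ 7 + q.rep 2 ^ 7 = 0 := hq
    constructor
    · intro h
      have key : ∃ l : ℂ, l ≠ 0 ∧ p.rep 0 ^ 7 = l * q.rep 0 ^ 7 ∧
          p.rep 1 ^ 7 = l * q.rep 1 ^ 7 ∧ p.rep 2 ^ 7 = l * q.rep 2 ^ 7 := by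
        by_cases hq1 : q.rep 1 = 0
        · have hq2 : q.rep 2 ≠ 0 := fun h2 => not_both_zero q hq ⟨hq1, h2⟩
          have hp1 : p.rep 1 = 0 := by
            have e : p.rep 1 ^ 7 * q.rep 2 ^ 7 = 0 := by rw [h, hq1]; ring
            rcases mul_eq_zero.1 e with h' | h'
            · exact pow7_eq_zero h'
            · exact absurd (pow7_eq_zero h') hq2
          have hp2 : p.rep 2 ≠ 0 := fun h2 => not_both_zero p hp ⟨hp1, h2⟩
          refine ⟨p.rep 2 ^ 7 / q.rep 2 ^ 7,
            div_ne_zero (pow_ne_zero _ hp2) (pow_ne_zero _ hq2), ?_, ?_, ?_⟩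
          · field_simp
            linear_combination q.rep 2 ^ 7 * hpF - p.rep 2 ^ 7 * hqF - h
          · rw [hp1, hq1]; ring
          · field_simp
        · have hp1 : p.rep 1 ≠ 0 := by
            intro h1
            apply not_both_zero p hp
            refine ⟨h1, ?_⟩
            have e : p.rep 2 ^ 7 * q.rep 1 ^ 7 = 0 := by rw [← h, h1]; ring
            rcases mul_eq_zero.1 e with h' | h'
            · exact pow7_eq_zero h'
            · exact absurd (pow7_eq_zero h') hq1
          refine ⟨p.rep 1 ^ 7 / q.rep 1 ^ 7,
            div_ne_zero (pow_ne_zero _ hp1) (pow_ne_zero _ hq1), ?_, ?_, ?_⟩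
          · field_simp
            linear_combination q.rep 1 ^ 7 * hpF - p.rep 1 ^ 7 * hqF + h
          · field_simp
          · field_simp
            linear_combination -h
      obtain ⟨l, hl, h0, h1, h2⟩ := key
      have keyc : ∃ c : ℂ, c ≠ 0 ∧ c * q.rep 0 = p.rep 0 ∧
          (c * q.rep 1) ^ 7 = p.rep 1 ^ 7 ∧ (c * q.rep 2) ^ 7 = p.rep 2 ^ 7 := by
        by_cases hq0 : q.rep 0 = 0
        · have hp0 : p.rep 0 = 0 := pow7_eq_zero (by rw [h0, hq0]; ring)
          obtain ⟨c, hc⟩ := root7 l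
          have hcne : c ≠ 0 := by
            intro h'; rw [h'] at hc
            exact hl (by rw [← hc]; norm_num)
          exact ⟨c, hcne, by rw [hq0, hp0, mul_zero],
            by rw [mul_pow, hc, ← h1], by rw [mul_pow, hc, ← h2]⟩
        · have hp0 : p.rep 0 ≠ 0 := by
            intro h'
            have h0' : l * q.rep 0 ^ 7 = 0 := by rw [← h0, h']; norm_num
            rcases mul_eq_zero.1 h0' with h'' | h''
            · exact hl h''
            · exact hq0 (pow7_eq_zero h'')
          have hq0' : q.rep 0 ^ 7 ≠ 0 := pow_ne_zero _ hq0
          have hcl : (p.rep 0 / q.rep 0) ^ 7 = l := by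
            rw [div_pow, h0]
            field_simp
          refine ⟨p.rep 0 / q.rep 0, div_ne_zero hp0 hq0, by field_simp, ?_, ?_⟩
          · rw [mul_pow, hcl, ← h1]
          · rw [mul_pow, hcl, ← h2]
      obtain ⟨c, hc, hc0, hc1, hc2⟩ := keyc
      have e1 : ∃ a : ZMod 7, ζ ^ a.val * p.rep 1 = c * q.rep 1 := by
        by_cases hp1 : p.rep 1 = 0
        · refine ⟨0, ?_⟩
          have e : c * q.rep 1 = 0 := pow7_eq_zero (by rw [hc1, hp1]; ring)
          rw [hp1, e]; ring
        · obtain ⟨a, ha⟩ := zeta_pow_aux hζ hc1 hp1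
          exact ⟨a, ha.symm⟩
      have e2 : ∃ b : ZMod 7, ζ ^ b.val * p.rep 2 = c * q.rep 2 := by
        by_cases hp2 : p.rep 2 = 0
        · refine ⟨0, ?_⟩
          have e : c * q.rep 2 = 0 := pow7_eq_zero (by rw [hc2, hp2]; ring)
          rw [hp2, e]; ring
        · obtain ⟨b, hb⟩ := zeta_pow_aux hζ hc2 hp2
          exact ⟨b, hb.symm⟩
      obtain ⟨a, ha⟩ := e1
      obtain ⟨b, hb⟩ := e2
      refine ⟨(a, b), c, hc, ?_⟩
      funext i
      fin_cases i <;>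
        simp only [diagAct, Pi.smul_apply, smul_eq_mul, Matrix.cons_val_zero,
          Matrix.cons_val_one, Matrix.head_cons, Matrix.cons_val_two, Matrix.tail_cons]
      · exact hc0.symm
      · exact ha
      · exact hb
    · rintro ⟨⟨a, b⟩, c, hc, hac⟩
      have h1 := congrFun hac 1
      have h2 := congrFun hac 2
      simp only [diagAct, Pi.smul_apply, smul_eq_mul, Matrix.cons_val_zero,
        Matrix.cons_val_one, Matrix.head_cons, Matrix.cons_val_two, Matrix.tail_cons] at h1 h2
      have hz7 : (ζ ^ a.val) ^ 7 = 1 := by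
        rw [← pow_mul, mul_comm, pow_mul, hζ.pow_eq_one, one_pow]
      have hz7' : (ζ ^ b.val) ^ 7 = 1 := by
        rw [← pow_mul, mul_comm, pow_mul, hζ.pow_eq_one, one_pow]
      have e1 : p.rep 1 ^ 7 = c ^ 7 * q.rep 1 ^ 7 := by
        have := congrArg (· ^ 7) h1
        simp only [mul_pow] at this
        rw [hz7, one_mul] at this
        rw [this]
      have e2 : p.rep 2 ^ 7 = c ^ 7 * q.rep 2 ^ 7 := by
        have := congrArg (· ^ 7) h2
        simp only [mul_pow] at this
        rw [hz7', one_mul] at this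
        rw [this]
      rw [e1, e2]; ring
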